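/- E(R,I) is semiprime if and only if: (1) I is a semiprime rng; (2) there is no nonzero ideal A of R with A² = 0 and A ⊆ ann_R(I); and (3) there do not exist a nonzero R-subrng J ⊆ I and an R-homomorphism φ: J → R with J² = 0 such that ij = iφ(j) and ji = φ(j)i for all i ∈ I, j ∈ J. In particular, if R and I are both semiprime, then E(R,I) is semiprime. -/

import Mathlib

open MulOpposite

/-- The underlying type of the Dorroh (ideal) extension `E(R,I)`. -/
@[ext]
structure Dorroh (R : Type*) (I : Type*) where
  fst : R
  snd : I

/-- `I` is an `R`-rng: a nonunital ring with a compatible `(R,R)`-bimodule structure. -/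
class IsRRng (R I : Type*) [Ring R] [NonUnitalRing I] [Module R I] [Module Rᵐᵒᵖ I] : Prop where
  smul_op_smul : ∀ (r : R) (s : Rᵐᵒᵖ) (x : I), r • s • x = s • r • x
  smul_mul : ∀ (r : R) (x y : I), r • (x * y) = (r • x) * y
  mul_smul_eq : ∀ (r : R) (x y : I), x * (r • y) = (op r • x) * y
  op_smul_mul : ∀ (r : R) (x y : I), op r • (x * y) = x * (op r • y)

namespace Dorroh

variable {R I : Type*} [Ring R] [NonUnitalRing I] [Module R I] [Module Rᵐᵒᵖ I] [IsRRng R I]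

instance : Add (Dorroh R I) := ⟨fun p q => ⟨p.fst + q.fst, p.snd + q.snd⟩⟩
instance : Zero (Dorroh R I) := ⟨⟨0, 0⟩⟩
instance : Neg (Dorroh R I) := ⟨fun p => ⟨-p.fst, -p.snd⟩⟩
instance : Mul (Dorroh R I) :=
  ⟨fun p q => ⟨p.fst * q.fst, op q.fst • p.snd + p.fst • q.snd + p.snd * q.snd⟩⟩
instance : One (Dorroh R I) := ⟨⟨1, 0⟩⟩

set_option linter.unusedSectionVars false

@[simp] theorem add_fst (p q : Dorroh R I) : (p + q).fst = p.fst + q.fst := rfl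
@[simp] theorem add_snd (p q : Dorroh R I) : (p + q).snd = p.snd + q.snd := rfl
@[simp] theorem zero_fst : (0 : Dorroh R I).fst = 0 := rfl
@[simp] theorem zero_snd : (0 : Dorroh R I).snd = 0 := rfl
@[simp] theorem neg_fst (p : Dorroh R I) : (-p).fst = -p.fst := rfl
@[simp] theorem neg_snd (p : Dorroh R I) : (-p).snd = -p.snd := rfl
@[simp] theorem mul_fst (p q : Dorroh R I) : (p * q).fst = p.fst * q.fst := rfl
@[simp] theorem mul_snd (p q : Dorroh R I) :
    (p * q).snd = op q.fst • p.snd + p.fst • q.snd + p.snd * q.snd := rfl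
@[simp] theorem one_fst : (1 : Dorroh R I).fst = 1 := rfl
@[simp] theorem one_snd : (1 : Dorroh R I).snd = 0 := rfl

instance : Ring (Dorroh R I) where
  add_assoc a b c := by ext <;> simp [add_assoc]
  zero_add a := by ext <;> simp
  add_zero a := by ext <;> simp
  add_comm a b := by ext <;> simp [add_comm]
  neg_add_cancel a := by ext <;> simp
  mul_assoc a b c := by
    ext
    · simp [mul_assoc]
    · simp only [mul_snd, mul_fst, smul_add, mul_smul, op_mul, mul_add, add_mul,
        IsRRng.smul_mul, IsRRng.op_smul_mul, IsRRng.smul_op_smul, mul_assoc]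
      rw [← IsRRng.mul_smul_eq]
      abel
  one_mul a := by ext <;> simp
  mul_one a := by ext <;> simp
  left_distrib a b c := by
    ext
    · simp [mul_add]
    · simp [op_add, add_smul, smul_add, mul_add]
      abel
  right_distrib a b c := by
    ext
    · simp [add_mul]
    · simp [op_add, add_smul, smul_add, add_mul]
      abel
  zero_mul a := by ext <;> simp
  mul_zero a := by ext <;> simp
  nsmul := nsmulRec
  zsmul := zsmulRec

theorem mul_def (p q : Dorroh R I) :
    p * q = ⟨p.fst * q.fst, op q.fst • p.snd + p.fst • q.snd + p.snd * q.snd⟩ := rfl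

theorem one_def : (1 : Dorroh R I) = ⟨1, 0⟩ := rfl

theorem add_def (p q : Dorroh R I) : p + q = ⟨p.fst + q.fst, p.snd + q.snd⟩ := rfl

end Dorroh

/-- An `R`-subrng of the `R`-rng `I`: an `(R,R)`-subbimodule closed under multiplication. -/
def IsRSubrng (R : Type*) {I : Type*} [Ring R] [NonUnitalRing I] [Module R I]
    [Module Rᵐᵒᵖ I] (J : Set I) : Prop :=
  (0 : I) ∈ J ∧ (∀ x ∈ J, ∀ y ∈ J, x + y ∈ J) ∧ (∀ x ∈ J, -x ∈ J) ∧
    (∀ x ∈ J, ∀ y ∈ J, x * y ∈ J) ∧ (∀ (r : R), ∀ x ∈ J, r • x ∈ J) ∧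
    (∀ (r : R), ∀ x ∈ J, op r • x ∈ J)

/-- An `R`-ideal of the `R`-rng `I`: an `(R,R)`-subbimodule that is an ideal of `I`. -/
def IsRIdeal (R : Type*) {I : Type*} [Ring R] [NonUnitalRing I] [Module R I]
    [Module Rᵐᵒᵖ I] (J : Set I) : Prop :=
  IsRSubrng R J ∧ ∀ (i : I), ∀ j ∈ J, i * j ∈ J ∧ j * i ∈ J

/-- The annihilator `ann_R(I) = {r : R | rI = Ir = 0}`. -/
def annR (R I : Type*) [Ring R] [NonUnitalRing I] [Module R I] [Module Rᵐᵒᵖ I] : Set R :=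
  {r : R | ∀ x : I, r • x = 0 ∧ op r • x = 0}

/-- An element `x` of a rng is left quasi-regular if `x + k + kx = 0` for some `k`. -/
def IsLQR {I : Type*} [NonUnitalRing I] (x : I) : Prop := ∃ k : I, x + k + k * x = 0

/-- The Jacobson radical of a rng. -/
def rngRad (I : Type*) [NonUnitalRing I] : Set I := {x : I | ∀ j : I, IsLQR (j * x)}

/-- `npowNZ x n = x ^ (n+1)` in a nonunital ring. -/
def npowNZ {I : Type*} [NonUnitalRing I] (x : I) : ℕ → I
  | 0 => x
  | n + 1 => npowNZ x n * x

/-- An element of a rng is nilpotent if some positive power of it is zero. -/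
def IsNilElem {I : Type*} [NonUnitalRing I] (x : I) : Prop := ∃ n : ℕ, npowNZ x n = 0

/-- A subset of a rng is nil if each of its elements is nilpotent. -/
def SetIsNil {I : Type*} [NonUnitalRing I] (S : Set I) : Prop := ∀ x ∈ S, IsNilElem x

/-- A subset of a rng is nilpotent if for some `n` every product of `n+1` of its
elements vanishes. -/
def SetIsNilpotent {I : Type*} [NonUnitalRing I] (S : Set I) : Prop :=
  ∃ n : ℕ, ∀ (x : I) (l : List I), x ∈ S → (∀ y ∈ l, y ∈ S) → l.length = n →
    l.foldl (· * ·) x = 0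

/-- The upper nil radical of a rng: the sum of all of its nil (two-sided) ideals. -/
def upperNil (I : Type*) [NonUnitalRing I] : Set I :=
  ((sSup {J : TwoSidedIdeal I | ∀ x ∈ J, IsNilElem x} : TwoSidedIdeal I) : Set I)

/-- A rng is semiprime if it has no nonzero ideal of square zero. -/
def IsSemiprimeRng (I : Type*) [NonUnitalRing I] : Prop :=
  ∀ J : TwoSidedIdeal I, (∀ x ∈ J, ∀ y ∈ J, x * y = 0) → J = ⊥

/-- A rng is prime if the product of any two nonzero ideals is nonzero. -/
def IsPrimeRng (I : Type*) [NonUnitalRing I] : Prop :=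
  ∀ J K : TwoSidedIdeal I, (∀ x ∈ J, ∀ y ∈ K, x * y = 0) → J = ⊥ ∨ K = ⊥

/-- `ψ : I → R` restricts to an `R`-homomorphism on the subset `J ⊆ I`. -/
def IsRHomOn (R : Type*) {I : Type*} [Ring R] [NonUnitalRing I] [Module R I]
    [Module Rᵐᵒᵖ I] (J : Set I) (ψ : I → R) : Prop :=
  (∀ x ∈ J, ∀ y ∈ J, ψ (x + y) = ψ x + ψ y) ∧
    (∀ x ∈ J, ∀ y ∈ J, ψ (x * y) = ψ x * ψ y) ∧
    (∀ (r : R), ∀ x ∈ J, ψ (r • x) = r * ψ x) ∧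
    (∀ (r : R), ∀ x ∈ J, ψ (op r • x) = ψ x * r)

/-- `φ : I → R` is an `R`-homomorphism. -/
def IsRHom (R : Type*) {I : Type*} [Ring R] [NonUnitalRing I] [Module R I]
    [Module Rᵐᵒᵖ I] (φ : I → R) : Prop :=
  (∀ x y : I, φ (x + y) = φ x + φ y) ∧ (∀ x y : I, φ (x * y) = φ x * φ y) ∧
    (∀ (r : R) (x : I), φ (r • x) = r * φ x) ∧ (∀ (r : R) (x : I), φ (op r • x) = φ x * r)

/-- A two-sided ideal `P` of a ring is prime if `AB ⊆ P` implies `A ⊆ P` or `B ⊆ P`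
for all two-sided ideals `A`, `B`. -/
def TsiPrime {S : Type*} [Ring S] (P : TwoSidedIdeal S) : Prop :=
  ∀ A B : TwoSidedIdeal S, (∀ a ∈ A, ∀ b ∈ B, a * b ∈ P) → A ≤ P ∨ B ≤ P

/-- A two-sided ideal is maximal if it is a maximal proper ideal. -/
def TsiMaximal {S : Type*} [Ring S] (P : TwoSidedIdeal S) : Prop :=
  P ≠ ⊤ ∧ ∀ Q : TwoSidedIdeal S, P ≤ Q → Q = P ∨ Q = ⊤

/-- A two-sided-ideal subset of a ring. -/
def IsTwoSidedIdealSet (R : Type*) [Ring R] (P : Set R) : Prop :=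
  (0 : R) ∈ P ∧ (∀ x ∈ P, ∀ y ∈ P, x + y ∈ P) ∧ (∀ x ∈ P, -x ∈ P) ∧
    (∀ (r : R), ∀ x ∈ P, r * x ∈ P ∧ x * r ∈ P)

/-- A subset `P` of `R` is a prime ideal if it is a two-sided ideal and `AB ⊆ P`
implies `A ⊆ P` or `B ⊆ P` for all two-sided ideals `A, B`. -/
def IsPrimeIdealSet (R : Type*) [Ring R] (P : Set R) : Prop :=
  IsTwoSidedIdealSet R P ∧ ∀ A B : TwoSidedIdeal R,
    (∀ a ∈ A, ∀ b ∈ B, a * b ∈ P) → ((A : Set R) ⊆ P ∨ (B : Set R) ⊆ P)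

/-- A subset `P` of `R` is a semiprime ideal if it is a two-sided ideal and `A² ⊆ P`
implies `A ⊆ P` for all two-sided ideals `A`. -/
def IsSemiprimeIdealSet (R : Type*) [Ring R] (P : Set R) : Prop :=
  IsTwoSidedIdealSet R P ∧ ∀ A : TwoSidedIdeal R,
    (∀ a ∈ A, ∀ b ∈ A, a * b ∈ P) → (A : Set R) ⊆ P

section IdealData

variable (R I : Type*) [Ring R] [NonUnitalRing I] [Module R I] [Module Rᵐᵒᵖ I] [IsRRng R I]

/-- The data describing an ideal of `E(R,I)`: ideals `Z ⊆ A` of `R`, an `R`-subrng `J ⊆ I`,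
and a surjective `R`-homomorphism `φ : J → A/Z` (represented by a set-map `ψ : I → R`
choosing representatives), satisfying conditions (a) `ai - ji ∈ ker φ` and
(b) `ia - ij ∈ ker φ` for all `(a,-j) ∈ K`, `i ∈ I`. -/
def DorrohIdealData (A Z : TwoSidedIdeal R) (J : Set I) (ψ : I → R) : Prop :=
  Z ≤ A ∧ IsRSubrng R J ∧
    (∀ x ∈ J, ∀ y ∈ J, ψ (x + y) - (ψ x + ψ y) ∈ Z) ∧
    (∀ x ∈ J, ∀ y ∈ J, ψ (x * y) - ψ x * ψ y ∈ Z) ∧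
    (∀ (r : R), ∀ x ∈ J, ψ (r • x) - r * ψ x ∈ Z) ∧
    (∀ (r : R), ∀ x ∈ J, ψ (op r • x) - ψ x * r ∈ Z) ∧
    (∀ j ∈ J, ψ j ∈ A) ∧
    (∀ a ∈ A, ∃ j ∈ J, a - ψ j ∈ Z) ∧
    (∀ (a : R), ∀ j ∈ J, a ∈ A → a - ψ j ∈ Z → ∀ i : I,
      (a • i - j * i ∈ J ∧ ψ (a • i - j * i) ∈ Z) ∧
      (op a • i - i * j ∈ J ∧ ψ (op a • i - i * j) ∈ Z))

/-- The subset `K = {(a, -j) : a ∈ A, j ∈ J, a + Z = φ(j)}` of `E(R,I)`. -/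
def DorrohIdealSet (A Z : TwoSidedIdeal R) (J : Set I) (ψ : I → R) : Set (Dorroh R I) :=
  {p : Dorroh R I | p.fst ∈ A ∧ -p.snd ∈ J ∧ p.fst - ψ (-p.snd) ∈ Z}

end IdealData

variable (R I : Type*) [Ring R] [NonUnitalRing I] [Module R I] [Module Rᵐᵒᵖ I] [IsRRng R I]

open MulOpposite


section DorrohHelpers

lemma tsi_eq_bot {S : Type*} [NonUnitalNonAssocRing S] {K : TwoSidedIdeal S}
    (h : ∀ x ∈ K, x = 0) : K = ⊥ :=
  TwoSidedIdeal.ext fun x =>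
    ⟨fun hx => (TwoSidedIdeal.mem_bot _).mpr (h x hx),
     fun hx => by rw [(TwoSidedIdeal.mem_bot _).mp hx]; exact TwoSidedIdeal.zero_mem _⟩

lemma tsi_bot_forall {S : Type*} [NonUnitalNonAssocRing S] {K : TwoSidedIdeal S}
    (h : K = ⊥) : ∀ x ∈ K, x = 0 := fun x hx =>
  (TwoSidedIdeal.mem_bot _).mp (h ▸ hx)

variable {R I}

/-- The ideal of `E(R,I)` with carrier `{(0, x) : x ∈ S}` for an `R`-stable
ideal-like subset `S` of `I`. -/
def dIdeal (S : Set I) (h0 : (0 : I) ∈ S)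
    (hadd : ∀ x ∈ S, ∀ y ∈ S, x + y ∈ S)
    (hneg : ∀ x ∈ S, -x ∈ S)
    (hsmul : ∀ (r : R), ∀ x ∈ S, r • x ∈ S)
    (hop : ∀ (r : R), ∀ x ∈ S, op r • x ∈ S)
    (hml : ∀ (i : I), ∀ x ∈ S, i * x ∈ S)
    (hmr : ∀ (i : I), ∀ x ∈ S, x * i ∈ S) : TwoSidedIdeal (Dorroh R I) :=
  TwoSidedIdeal.mk' {p | p.fst = 0 ∧ p.snd ∈ S}
    ⟨rfl, h0⟩
    (fun {x y} hx hy => ⟨by simp [hx.1, hy.1], hadd _ hx.2 _ hy.2⟩)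
    (fun {x} hx => ⟨by simp [hx.1], hneg _ hx.2⟩)
    (fun {x y} hy => ⟨by simp [hy.1], by
      simp only [Dorroh.mul_snd, hy.1, op_zero, zero_smul, zero_add]
      exact hadd _ (hsmul _ _ hy.2) _ (hml _ _ hy.2)⟩)
    (fun {x y} hx => ⟨by simp [hx.1], by
      simp only [Dorroh.mul_snd, hx.1, zero_smul, add_zero]
      exact hadd _ (hop _ _ hx.2) _ (hmr _ _ hx.2)⟩)

lemma mem_dIdeal {S : Set I} {h0 hadd hneg hsmul hop hml hmr} {p : Dorroh R I} :
    p ∈ dIdeal S h0 hadd hneg hsmul hop hml hmr ↔ p.fst = 0 ∧ p.snd ∈ S :=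
  TwoSidedIdeal.mem_mk' _ _ _ _ _ _ _

/-- If `E(R,I)` is semiprime then `I` is a semiprime rng. -/
lemma dorroh_semiprime_to_I (hE : IsSemiprimeRng (Dorroh R I)) : IsSemiprimeRng I := by
  intro J hJ2
  classical
  set G : Set I := {x | ∃ r s : R, ∃ j : I, j ∈ J ∧ x = r • op s • j} with hG
  set S1 := AddSubgroup.closure G with hS1def
  have hJG : ∀ j ∈ J, j ∈ G := fun j hj => ⟨1, 1, j, hj, by rw [op_one, one_smul, one_smul]⟩
  have hS1J : ∀ j ∈ J, j ∈ S1 := fun j hj => AddSubgroup.subset_closure (hJG j hj)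
  have hS1smul : ∀ t : R, ∀ x ∈ S1, t • x ∈ S1 := by
    intro t x hx
    induction hx using AddSubgroup.closure_induction with
    | mem y hy =>
      obtain ⟨r, s, j, hj, rfl⟩ := hy
      exact AddSubgroup.subset_closure ⟨t * r, s, j, hj, smul_smul t r _⟩
    | zero => rw [smul_zero]; exact AddSubgroup.zero_mem _
    | add a b _ _ ha hb => rw [smul_add]; exact AddSubgroup.add_mem _ ha hb
    | neg a _ ha => rw [smul_neg]; exact AddSubgroup.neg_mem _ ha
  have hS1op : ∀ t : R, ∀ x ∈ S1, op t • x ∈ S1 := by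
    intro t x hx
    induction hx using AddSubgroup.closure_induction with
    | mem y hy =>
      obtain ⟨r, s, j, hj, rfl⟩ := hy
      refine AddSubgroup.subset_closure ⟨r, s * t, j, hj, ?_⟩
      rw [← IsRRng.smul_op_smul, smul_smul, ← op_mul]
    | zero => rw [smul_zero]; exact AddSubgroup.zero_mem _
    | add a b _ _ ha hb => rw [smul_add]; exact AddSubgroup.add_mem _ ha hb
    | neg a _ ha => rw [smul_neg]; exact AddSubgroup.neg_mem _ ha
  have hS1mulL : ∀ i : I, ∀ x ∈ S1, i * x ∈ S1 := by
    intro i x hx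
    induction hx using AddSubgroup.closure_induction with
    | mem y hy =>
      obtain ⟨r, s, j, hj, rfl⟩ := hy
      refine AddSubgroup.subset_closure ⟨1, s, (op r • i) * j, J.mul_mem_left _ _ hj, ?_⟩
      rw [one_smul, IsRRng.mul_smul_eq, IsRRng.op_smul_mul]
    | zero => rw [mul_zero]; exact AddSubgroup.zero_mem _
    | add a b _ _ ha hb => rw [mul_add]; exact AddSubgroup.add_mem _ ha hb
    | neg a _ ha => rw [mul_neg]; exact AddSubgroup.neg_mem _ ha
  have hmulS1 : ∀ x ∈ S1, ∀ v : I, x * v ∈ S1 := by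
    intro x hx v
    induction hx using AddSubgroup.closure_induction with
    | mem y hy =>
      obtain ⟨r, s, j, hj, rfl⟩ := hy
      refine AddSubgroup.subset_closure ⟨r, 1, j * (s • v), J.mul_mem_right _ _ hj, ?_⟩
      rw [op_one, one_smul, ← IsRRng.smul_mul, IsRRng.mul_smul_eq]
    | zero => rw [zero_mul]; exact AddSubgroup.zero_mem _
    | add a b _ _ ha hb => rw [add_mul]; exact AddSubgroup.add_mem _ ha hb
    | neg a _ ha => rw [neg_mul]; exact AddSubgroup.neg_mem _ ha
  have f3 : ∀ j ∈ J, ∀ z : I, ∀ x ∈ S1, (j * z) * x = 0 := by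
    intro j hj z x hx
    induction hx using AddSubgroup.closure_induction with
    | mem y hy =>
      obtain ⟨r, s, j', hj', rfl⟩ := hy
      rw [IsRRng.mul_smul_eq, IsRRng.op_smul_mul r j z, ← IsRRng.op_smul_mul s _ j',
        mul_assoc, hJ2 j hj _ (J.mul_mem_left _ _ hj'), smul_zero]
    | zero => rw [mul_zero]
    | add a b _ _ ha hb => rw [mul_add, ha, hb, add_zero]
    | neg a _ ha => rw [mul_neg, ha, neg_zero]
  have claimB : ∀ u ∈ S1, ∀ v : I, ∀ w ∈ S1, (u * v) * w = 0 := by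
    intro u hu v w hw
    induction hu using AddSubgroup.closure_induction with
    | mem y hy =>
      obtain ⟨r, s, j, hj, rfl⟩ := hy
      have h1 : (r • op s • j) * v = r • (j * (s • v)) := by
        rw [← IsRRng.smul_mul, IsRRng.mul_smul_eq]
      rw [h1, ← IsRRng.smul_mul, f3 j hj (s • v) w hw, smul_zero]
    | zero => rw [zero_mul, zero_mul]
    | add a b _ _ ha hb => rw [add_mul, add_mul, ha, hb, add_zero]
    | neg a _ ha => rw [neg_mul, neg_mul, ha, neg_zero]
  set G2 : Set I := {x | ∃ a ∈ S1, ∃ b ∈ S1, x = a * b} with hG2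
  set S2 := AddSubgroup.closure G2 with hS2def
  have hS2S1 : S2 ≤ S1 := by
    rw [hS2def, AddSubgroup.closure_le]
    rintro x ⟨a, ha, b, hb, rfl⟩
    exact hmulS1 a ha b
  have f7 : ∀ x ∈ S2, ∀ y ∈ S2, x * y = 0 := by
    intro x hx y hy
    induction hx using AddSubgroup.closure_induction with
    | mem z hz =>
      obtain ⟨a, ha, b, hb, rfl⟩ := hz
      exact claimB a ha b y (hS2S1 hy)
    | zero => rw [zero_mul]
    | add a b _ _ ha hb => rw [add_mul, ha, hb, add_zero]
    | neg a _ ha => rw [neg_mul, ha, neg_zero]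
  have h2smul : ∀ t : R, ∀ x ∈ S2, t • x ∈ S2 := by
    intro t x hx
    induction hx using AddSubgroup.closure_induction with
    | mem y hy =>
      obtain ⟨a, ha, b, hb, rfl⟩ := hy
      exact AddSubgroup.subset_closure ⟨t • a, hS1smul t a ha, b, hb, IsRRng.smul_mul t a b⟩
    | zero => rw [smul_zero]; exact AddSubgroup.zero_mem _
    | add a b _ _ ha hb => rw [smul_add]; exact AddSubgroup.add_mem _ ha hb
    | neg a _ ha => rw [smul_neg]; exact AddSubgroup.neg_mem _ ha
  have h2op : ∀ t : R, ∀ x ∈ S2, op t • x ∈ S2 := by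
    intro t x hx
    induction hx using AddSubgroup.closure_induction with
    | mem y hy =>
      obtain ⟨a, ha, b, hb, rfl⟩ := hy
      exact AddSubgroup.subset_closure
        ⟨a, ha, op t • b, hS1op t b hb, IsRRng.op_smul_mul t a b⟩
    | zero => rw [smul_zero]; exact AddSubgroup.zero_mem _
    | add a b _ _ ha hb => rw [smul_add]; exact AddSubgroup.add_mem _ ha hb
    | neg a _ ha => rw [smul_neg]; exact AddSubgroup.neg_mem _ ha
  have h2ml : ∀ i : I, ∀ x ∈ S2, i * x ∈ S2 := by
    intro i x hx
    induction hx using AddSubgroup.closure_induction with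
    | mem y hy =>
      obtain ⟨a, ha, b, hb, rfl⟩ := hy
      exact AddSubgroup.subset_closure ⟨i * a, hS1mulL i a ha, b, hb, (mul_assoc i a b).symm⟩
    | zero => rw [mul_zero]; exact AddSubgroup.zero_mem _
    | add a b _ _ ha hb => rw [mul_add]; exact AddSubgroup.add_mem _ ha hb
    | neg a _ ha => rw [mul_neg]; exact AddSubgroup.neg_mem _ ha
  have h2mr : ∀ i : I, ∀ x ∈ S2, x * i ∈ S2 := by
    intro i x hx
    induction hx using AddSubgroup.closure_induction with
    | mem y hy =>
      obtain ⟨a, ha, b, hb, rfl⟩ := hy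
      exact AddSubgroup.subset_closure ⟨a, ha, b * i, hmulS1 b hb i, mul_assoc a b i⟩
    | zero => rw [zero_mul]; exact AddSubgroup.zero_mem _
    | add a b _ _ ha hb => rw [add_mul]; exact AddSubgroup.add_mem _ ha hb
    | neg a _ ha => rw [neg_mul]; exact AddSubgroup.neg_mem _ ha
  -- the ideal of `E(R,I)` corresponding to `S2` is square-zero
  set K2 : TwoSidedIdeal (Dorroh R I) :=
    dIdeal (S2 : Set I) (AddSubgroup.zero_mem _) (fun x hx y hy => AddSubgroup.add_mem _ hx hy)
      (fun x hx => AddSubgroup.neg_mem _ hx) h2smul h2op h2ml h2mr with hK2def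
  have hK2 : K2 = ⊥ := by
    refine hE K2 fun p hp q hq => ?_
    rw [hK2def, mem_dIdeal] at hp hq
    ext
    · simp [hp.1]
    · simp [hp.1, hq.1, f7 _ hp.2 _ hq.2]
  have h2z : ∀ x ∈ S2, x = 0 := by
    intro x hx
    have h := tsi_bot_forall hK2 ⟨0, x⟩ (mem_dIdeal.mpr ⟨rfl, hx⟩)
    exact congrArg Dorroh.snd h
  have hS1sq : ∀ u ∈ S1, ∀ v ∈ S1, u * v = 0 := fun u hu v hv =>
    h2z _ (AddSubgroup.subset_closure ⟨u, hu, v, hv, rfl⟩)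
  set K1 : TwoSidedIdeal (Dorroh R I) :=
    dIdeal (S1 : Set I) (AddSubgroup.zero_mem _) (fun x hx y hy => AddSubgroup.add_mem _ hx hy)
      (fun x hx => AddSubgroup.neg_mem _ hx) hS1smul hS1op hS1mulL
      (fun i x hx => hmulS1 x hx i) with hK1def
  have hK1 : K1 = ⊥ := by
    refine hE K1 fun p hp q hq => ?_
    rw [hK1def, mem_dIdeal] at hp hq
    ext
    · simp [hp.1]
    · simp [hp.1, hq.1, hS1sq _ hp.2 _ hq.2]
  have h1z : ∀ x ∈ S1, x = 0 := by
    intro x hx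
    have h := tsi_bot_forall hK1 ⟨0, x⟩ (mem_dIdeal.mpr ⟨rfl, hx⟩)
    exact congrArg Dorroh.snd h
  exact tsi_eq_bot fun j hj => h1z j (hS1J j hj)

/-- If `E(R,I)` is semiprime then there is no nonzero square-zero ideal of `R`
inside `ann_R(I)`. -/
lemma dorroh_semiprime_no_ann (hE : IsSemiprimeRng (Dorroh R I)) :
    ¬ ∃ A : TwoSidedIdeal R, A ≠ ⊥ ∧ (∀ x ∈ A, ∀ y ∈ A, x * y = 0) ∧
      (A : Set R) ⊆ annR R I := by
  rintro ⟨A, hA0, hA2, hann⟩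
  set K : TwoSidedIdeal (Dorroh R I) :=
    TwoSidedIdeal.mk' {p : Dorroh R I | p.fst ∈ A ∧ p.snd = 0}
      ⟨A.zero_mem, rfl⟩
      (fun {x y} hx hy => ⟨A.add_mem hx.1 hy.1, by simp [hx.2, hy.2]⟩)
      (fun {x} hx => ⟨A.neg_mem hx.1, by simp [hx.2]⟩)
      (fun {x y} hy => ⟨A.mul_mem_left _ _ hy.1, by
        simp only [Dorroh.mul_snd, hy.2, smul_zero, mul_zero, add_zero]
        exact (hann hy.1 x.snd).2⟩)
      (fun {x y} hx => ⟨A.mul_mem_right _ _ hx.1, by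
        simp only [Dorroh.mul_snd, hx.2, smul_zero, zero_mul, zero_add, add_zero]
        exact (hann hx.1 y.snd).1⟩) with hKdef
  have hmem : ∀ p : Dorroh R I, p ∈ K ↔ p.fst ∈ A ∧ p.snd = 0 := fun p => by
    rw [hKdef]; exact TwoSidedIdeal.mem_mk' _ _ _ _ _ _ _
  have hKbot : K = ⊥ := by
    refine hE K fun p hp q hq => ?_
    rw [hmem] at hp hq
    ext
    · simpa using hA2 _ hp.1 _ hq.1
    · simp [hp.2, hq.2]
  have hA : ∀ a ∈ A, a = 0 := by
    intro a ha
    have h := tsi_bot_forall hKbot ⟨a, 0⟩ ((hmem _).mpr ⟨ha, rfl⟩)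
    exact congrArg Dorroh.fst h
  exact hA0 (tsi_eq_bot hA)

/-- If `E(R,I)` is semiprime then there is no nonzero square-zero `R`-subrng of `I`
with a compatible `R`-homomorphism to `R`. -/
lemma dorroh_semiprime_no_J (hE : IsSemiprimeRng (Dorroh R I)) :
    ¬ ∃ (J : Set I) (ψ : I → R), IsRSubrng R J ∧ (∃ x ∈ J, x ≠ 0) ∧
      IsRHomOn R J ψ ∧ (∀ x ∈ J, ∀ y ∈ J, x * y = 0) ∧
      (∀ i : I, ∀ j ∈ J, i * j = op (ψ j) • i ∧ j * i = ψ j • i) := by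
  rintro ⟨J, ψ, ⟨h0J, haddJ, hnegJ, hmulJ, hsmulJ, hopJ⟩, ⟨x0, hx0J, hx00⟩,
    ⟨ψadd, ψmul, ψsmul, ψop⟩, hJ2, hcomp⟩
  have hψ0 : ψ 0 = 0 := by
    have h : ψ 0 = ψ 0 + ψ 0 := by simpa using ψadd 0 h0J 0 h0J
    exact left_eq_add.mp h
  set K : TwoSidedIdeal (Dorroh R I) :=
    TwoSidedIdeal.mk' {p : Dorroh R I | -p.snd ∈ J ∧ p.fst = ψ (-p.snd)}
      ⟨by simpa using h0J, by simp [hψ0]⟩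
      (fun {x y} hx hy => by
        refine ⟨?_, ?_⟩
        · simp only [Dorroh.add_snd, neg_add]
          exact haddJ _ hx.1 _ hy.1
        · simp only [Dorroh.add_fst, Dorroh.add_snd, neg_add]
          rw [ψadd _ hx.1 _ hy.1, ← hx.2, ← hy.2])
      (fun {x} hx => by
        refine ⟨by simpa using hnegJ _ hx.1, ?_⟩
        have hψneg : ψ (- -x.snd) = -ψ (-x.snd) := by
          rw [← neg_one_smul R (-x.snd), ψsmul (-1) _ hx.1, neg_one_mul]
        simp only [Dorroh.neg_snd, neg_neg] at hψneg ⊢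
        rw [hψneg, ← hx.2]
        simp)
      (fun {p q} hq => by
        have hx : p.snd * q.snd = -(op (ψ (-q.snd)) • p.snd) := by
          have hc := (hcomp p.snd (-q.snd) hq.1).1
          rw [mul_neg] at hc
          rw [← hc, neg_neg]
        have hsnd : (p * q).snd = p.fst • q.snd := by
          rw [Dorroh.mul_snd, hx, hq.2]
          abel
        refine ⟨?_, ?_⟩
        · rw [hsnd, ← smul_neg]
          exact hsmulJ _ _ hq.1
        · show (p * q).fst = ψ (-(p * q).snd)
          rw [Dorroh.mul_fst, hsnd, ← smul_neg, ψsmul _ _ hq.1, ← hq.2])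
      (fun {p q} hp => by
        have hx : p.snd * q.snd = -(ψ (-p.snd) • q.snd) := by
          have hc := (hcomp q.snd (-p.snd) hp.1).2
          rw [neg_mul] at hc
          rw [← hc, neg_neg]
        have hsnd : (p * q).snd = op q.fst • p.snd := by
          rw [Dorroh.mul_snd, hx, hp.2]
          abel
        refine ⟨?_, ?_⟩
        · rw [hsnd, ← smul_neg]
          exact hopJ _ _ hp.1
        · show (p * q).fst = ψ (-(p * q).snd)
          rw [Dorroh.mul_fst, hsnd, ← smul_neg, ψop _ _ hp.1, ← hp.2]) with hKdef
  have hmem : ∀ p : Dorroh R I, p ∈ K ↔ -p.snd ∈ J ∧ p.fst = ψ (-p.snd) := fun p => by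
    rw [hKdef]; exact TwoSidedIdeal.mem_mk' _ _ _ _ _ _ _
  have hKbot : K = ⊥ := by
    refine hE K fun p hp q hq => ?_
    rw [hmem] at hp hq
    have h00 : (-p.snd) * (-q.snd) = 0 := hJ2 _ hp.1 _ hq.1
    ext
    · rw [Dorroh.mul_fst, hp.2, hq.2, ← ψmul _ hp.1 _ hq.1, h00, hψ0, Dorroh.zero_fst]
    · rw [Dorroh.mul_snd, hq.2, hp.2]
      have h1 : op (ψ (-q.snd)) • p.snd = 0 := by
        rw [← (hcomp p.snd _ hq.1).1, ← neg_neg p.snd, neg_mul, h00, neg_zero]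
      have h2 : ψ (-p.snd) • q.snd = 0 := by
        rw [← (hcomp q.snd _ hp.1).2, ← neg_neg q.snd, mul_neg, h00, neg_zero]
      have h3 : p.snd * q.snd = 0 := by
        rw [← neg_neg p.snd, ← neg_neg q.snd, neg_mul_neg, h00]
      rw [h1, h2, h3]
      simp
  have hx0K : (⟨ψ x0, -x0⟩ : Dorroh R I) ∈ K := by
    rw [hmem]
    constructor
    · simpa using hx0J
    · simp
  have h := tsi_bot_forall hKbot _ hx0K
  exact hx00 (neg_eq_zero.mp (congrArg Dorroh.snd h))

/-- Conditions (1)–(3) imply that `E(R,I)` is semiprime. -/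
lemma dorroh_semiprime_of (h1 : IsSemiprimeRng I)
    (h2 : ¬ ∃ A : TwoSidedIdeal R, A ≠ ⊥ ∧ (∀ x ∈ A, ∀ y ∈ A, x * y = 0) ∧
      (A : Set R) ⊆ annR R I)
    (h3 : ¬ ∃ (J : Set I) (ψ : I → R), IsRSubrng R J ∧ (∃ x ∈ J, x ≠ 0) ∧
      IsRHomOn R J ψ ∧ (∀ x ∈ J, ∀ y ∈ J, x * y = 0) ∧
      (∀ i : I, ∀ j ∈ J, i * j = op (ψ j) • i ∧ j * i = ψ j • i)) :
    IsSemiprimeRng (Dorroh R I) := by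
  classical
  intro K hK
  -- Step 1: K meets I trivially
  have hJ0 : ∀ i : I, (⟨0, i⟩ : Dorroh R I) ∈ K → i = 0 := by
    have hml : ∀ (x y : I), (⟨0, y⟩ : Dorroh R I) ∈ K → (⟨0, x * y⟩ : Dorroh R I) ∈ K := by
      intro x y hy
      have he : (⟨0, x⟩ : Dorroh R I) * ⟨0, y⟩ = ⟨0, x * y⟩ := by ext <;> simp
      exact he ▸ K.mul_mem_left ⟨0, x⟩ ⟨0, y⟩ hy
    have hmr : ∀ (x y : I), (⟨0, x⟩ : Dorroh R I) ∈ K → (⟨0, x * y⟩ : Dorroh R I) ∈ K := by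
      intro x y hx
      have he : (⟨0, x⟩ : Dorroh R I) * ⟨0, y⟩ = ⟨0, x * y⟩ := by ext <;> simp
      exact he ▸ K.mul_mem_right ⟨0, x⟩ ⟨0, y⟩ hx
    set J0 : TwoSidedIdeal I :=
      TwoSidedIdeal.mk' {i : I | (⟨0, i⟩ : Dorroh R I) ∈ K}
        (K.zero_mem)
        (fun {x y} hx hy => by
          show (⟨0, x + y⟩ : Dorroh R I) ∈ K
          have he : (⟨0, x⟩ : Dorroh R I) + ⟨0, y⟩ = ⟨0, x + y⟩ := by ext <;> simp
          exact he ▸ K.add_mem hx hy)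
        (fun {x} hx => by
          show (⟨0, -x⟩ : Dorroh R I) ∈ K
          have he : -(⟨0, x⟩ : Dorroh R I) = ⟨0, -x⟩ := by ext <;> simp
          exact he ▸ K.neg_mem hx)
        (fun {x y} hy => hml x y hy)
        (fun {x y} hx => hmr x y hx) with hJ0def
    have hmemJ0 : ∀ i : I, i ∈ J0 ↔ (⟨0, i⟩ : Dorroh R I) ∈ K := fun i => by
      rw [hJ0def]; exact TwoSidedIdeal.mem_mk' _ _ _ _ _ _ _
    have hsq : ∀ x ∈ J0, ∀ y ∈ J0, x * y = 0 := by
      intro x hx y hy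
      rw [hmemJ0] at hx hy
      have h := hK _ hx _ hy
      have he : (⟨0, x⟩ : Dorroh R I) * ⟨0, y⟩ = ⟨0, x * y⟩ := by ext <;> simp
      rw [he] at h
      exact congrArg Dorroh.snd h
    intro i hi
    exact tsi_bot_forall (h1 J0 hsq) i ((hmemJ0 i).mpr hi)
  -- basic consequences of K² = 0
  have hfst : ∀ p ∈ K, ∀ q ∈ K, p.fst * q.fst = 0 := fun p hp q hq => by
    have h := congrArg Dorroh.fst (hK p hp q hq)
    simpa using h
  have hrel1 : ∀ p ∈ K, ∀ i : I, op p.fst • i + i * p.snd = 0 := by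
    intro p hp i
    have h := K.mul_mem_left ⟨0, i⟩ p hp
    have he : (⟨0, i⟩ : Dorroh R I) * p = ⟨0, op p.fst • i + i * p.snd⟩ := by
      ext <;> simp
    rw [he] at h
    exact hJ0 _ h
  have hrel2 : ∀ p ∈ K, ∀ i : I, p.fst • i + p.snd * i = 0 := by
    intro p hp i
    have h := K.mul_mem_right p ⟨0, i⟩ hp
    have he : p * (⟨0, i⟩ : Dorroh R I) = ⟨0, p.fst • i + p.snd * i⟩ := by
      ext <;> simp
    rw [he] at h
    exact hJ0 _ h
  -- Step 2: K meets R trivially, via condition (2)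
  have hZ : ∀ a : R, (⟨a, (0 : I)⟩ : Dorroh R I) ∈ K → a = 0 := by
    intro a haK
    by_contra ha0
    set Z : TwoSidedIdeal R :=
      TwoSidedIdeal.mk' {r : R | (⟨r, (0 : I)⟩ : Dorroh R I) ∈ K}
        (K.zero_mem)
        (fun {x y} hx hy => by
          show (⟨x + y, (0 : I)⟩ : Dorroh R I) ∈ K
          have he : (⟨x, (0 : I)⟩ : Dorroh R I) + ⟨y, 0⟩ = ⟨x + y, 0⟩ := by ext <;> simp
          exact he ▸ K.add_mem hx hy)
        (fun {x} hx => by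
          show (⟨-x, (0 : I)⟩ : Dorroh R I) ∈ K
          have he : -(⟨x, (0 : I)⟩ : Dorroh R I) = ⟨-x, 0⟩ := by ext <;> simp
          exact he ▸ K.neg_mem hx)
        (fun {x y} hy => by
          show (⟨x * y, (0 : I)⟩ : Dorroh R I) ∈ K
          have he : (⟨x, (0 : I)⟩ : Dorroh R I) * ⟨y, 0⟩ = ⟨x * y, 0⟩ := by ext <;> simp
          exact he ▸ K.mul_mem_left ⟨x, 0⟩ ⟨y, 0⟩ hy)
        (fun {x y} hx => by
          show (⟨x * y, (0 : I)⟩ : Dorroh R I) ∈ K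
          have he : (⟨x, (0 : I)⟩ : Dorroh R I) * ⟨y, 0⟩ = ⟨x * y, 0⟩ := by ext <;> simp
          exact he ▸ K.mul_mem_right ⟨x, 0⟩ ⟨y, 0⟩ hx) with hZdef
    have hmemZ : ∀ r : R, r ∈ Z ↔ (⟨r, (0 : I)⟩ : Dorroh R I) ∈ K := fun r => by
      rw [hZdef]; exact TwoSidedIdeal.mem_mk' _ _ _ _ _ _ _
    refine h2 ⟨Z, ?_, ?_, ?_⟩
    · intro hbot
      exact ha0 (tsi_bot_forall hbot a ((hmemZ a).mpr haK))
    · intro x hx y hy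
      rw [hmemZ] at hx hy
      exact hfst _ hx _ hy
    · intro r hr
      rw [SetLike.mem_coe, hmemZ] at hr
      intro x
      constructor
      · have h := hrel2 _ hr x
        simpa using h
      · have h := hrel1 _ hr x
        simpa using h
  -- Step 3: the subrng J = {x | (a, -x) ∈ K for some a} and the map ψ
  set KS : Set I := {x : I | ∃ a : R, (⟨a, -x⟩ : Dorroh R I) ∈ K} with hKSdef
  have huniq : ∀ (x : I) (a b : R), (⟨a, -x⟩ : Dorroh R I) ∈ K →
      (⟨b, -x⟩ : Dorroh R I) ∈ K → a = b := by
    intro x a b ha hb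
    have h := K.add_mem ha (K.neg_mem hb)
    have he : (⟨a, -x⟩ : Dorroh R I) + -(⟨b, -x⟩ : Dorroh R I) = ⟨a - b, 0⟩ := by
      ext <;> simp [sub_eq_add_neg]
    rw [he] at h
    exact sub_eq_zero.mp (hZ _ h)
  set ψ : I → R := fun x =>
    if h : ∃ a : R, (⟨a, -x⟩ : Dorroh R I) ∈ K then h.choose else 0 with hψdef
  have hψspec : ∀ x ∈ KS, (⟨ψ x, -x⟩ : Dorroh R I) ∈ K := by
    intro x hx
    have hx' : ∃ a : R, (⟨a, -x⟩ : Dorroh R I) ∈ K := hx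
    show (⟨ψ x, -x⟩ : Dorroh R I) ∈ K
    rw [hψdef]
    simp only
    rw [dif_pos hx']
    exact hx'.choose_spec
  have hψval : ∀ (x : I) (a : R), (⟨a, -x⟩ : Dorroh R I) ∈ K → ψ x = a := fun x a ha =>
    huniq x _ a (hψspec x ⟨a, ha⟩) ha
  by_cases hKS0 : ∀ x ∈ KS, x = 0
  · -- K = ⊥
    refine tsi_eq_bot fun p hp => ?_
    have hpe : (⟨p.fst, - -p.snd⟩ : Dorroh R I) = p := by ext <;> simp
    have hmem : -p.snd ∈ KS := ⟨p.fst, by rw [hpe]; exact hp⟩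
    have hsnd0 : p.snd = 0 := neg_eq_zero.mp (hKS0 _ hmem)
    have hp' : (⟨p.fst, (0 : I)⟩ : Dorroh R I) ∈ K := by
      rw [show (⟨p.fst, (0 : I)⟩ : Dorroh R I) = p from by ext <;> simp [hsnd0]]
      exact hp
    have hf := hZ _ hp'
    ext <;> simp [hf, hsnd0]
  · push_neg at hKS0
    obtain ⟨x0, hx0, hx00⟩ := hKS0
    exfalso
    have relL : ∀ x ∈ KS, ∀ i : I, x * i = ψ x • i := by
      intro x hx i
      have h := hrel2 _ (hψspec x hx) i
      simp only [neg_mul] at h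
      exact (add_neg_eq_zero.mp h).symm
    have relR : ∀ x ∈ KS, ∀ i : I, i * x = op (ψ x) • i := by
      intro x hx i
      have h := hrel1 _ (hψspec x hx) i
      simp only [mul_neg] at h
      exact (add_neg_eq_zero.mp h).symm
    have hψψ : ∀ x ∈ KS, ∀ y ∈ KS, ψ x * ψ y = 0 := fun x hx y hy =>
      hfst _ (hψspec x hx) _ (hψspec y hy)
    have hsmul0 : ∀ x ∈ KS, ∀ y ∈ KS, ψ x • y = 0 := by
      intro x hx y hy
      have h := K.mul_mem_left ⟨ψ x, 0⟩ _ (hψspec y hy)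
      have he : (⟨ψ x, (0 : I)⟩ : Dorroh R I) * ⟨ψ y, -y⟩ = ⟨0, -(ψ x • y)⟩ := by
        ext
        · simpa using hψψ _ hx _ hy
        · simp
      rw [he] at h
      exact neg_eq_zero.mp (hJ0 _ h)
    have hmul0 : ∀ x ∈ KS, ∀ y ∈ KS, x * y = 0 := fun x hx y hy => by
      rw [relL x hx y, hsmul0 x hx y hy]
    have h0KS : (0 : I) ∈ KS := ⟨0, by
      rw [show (⟨(0 : R), -(0 : I)⟩ : Dorroh R I) = 0 from by ext <;> simp]
      exact K.zero_mem⟩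
    have haddKS : ∀ x ∈ KS, ∀ y ∈ KS, x + y ∈ KS := by
      intro x hx y hy
      refine ⟨ψ x + ψ y, ?_⟩
      have he : (⟨ψ x, -x⟩ : Dorroh R I) + ⟨ψ y, -y⟩ = ⟨ψ x + ψ y, -(x + y)⟩ := by
        ext <;> simp [neg_add, add_comm]
      exact he ▸ K.add_mem (hψspec x hx) (hψspec y hy)
    have hnegKS : ∀ x ∈ KS, -x ∈ KS := by
      intro x hx
      refine ⟨-ψ x, ?_⟩
      have he : -(⟨ψ x, -x⟩ : Dorroh R I) = ⟨-ψ x, - -x⟩ := by ext <;> simp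
      exact he ▸ K.neg_mem (hψspec x hx)
    have hsmulKS : ∀ (r : R), ∀ x ∈ KS, r • x ∈ KS ∧ ψ (r • x) = r * ψ x := by
      intro r x hx
      have he : (⟨r, (0 : I)⟩ : Dorroh R I) * ⟨ψ x, -x⟩ = ⟨r * ψ x, -(r • x)⟩ := by
        ext <;> simp
      have h : (⟨r * ψ x, -(r • x)⟩ : Dorroh R I) ∈ K := by
        rw [← he]; exact K.mul_mem_left ⟨r, 0⟩ _ (hψspec x hx)
      exact ⟨⟨r * ψ x, h⟩, hψval _ _ h⟩
    have hopKS : ∀ (r : R), ∀ x ∈ KS, op r • x ∈ KS ∧ ψ (op r • x) = ψ x * r := by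
      intro r x hx
      have he : (⟨ψ x, -x⟩ : Dorroh R I) * ⟨r, (0 : I)⟩ = ⟨ψ x * r, -(op r • x)⟩ := by
        ext <;> simp
      have h : (⟨ψ x * r, -(op r • x)⟩ : Dorroh R I) ∈ K := by
        rw [← he]; exact K.mul_mem_right _ ⟨r, 0⟩ (hψspec x hx)
      exact ⟨⟨ψ x * r, h⟩, hψval _ _ h⟩
    have hψ0 : ψ 0 = 0 := by
      refine hψval 0 0 ?_
      rw [show (⟨(0 : R), -(0 : I)⟩ : Dorroh R I) = 0 from by ext <;> simp]
      exact K.zero_mem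
    refine h3 ⟨KS, ψ, ⟨h0KS, haddKS, hnegKS, ?_, fun r x hx => (hsmulKS r x hx).1,
      fun r x hx => (hopKS r x hx).1⟩, ⟨x0, hx0, hx00⟩, ⟨?_, ?_, ?_, ?_⟩, hmul0,
      fun i j hj => ⟨relR j hj i, relL j hj i⟩⟩
    · intro x hx y hy
      rw [hmul0 x hx y hy]
      exact h0KS
    · intro x hx y hy
      refine hψval _ _ ?_
      have he : (⟨ψ x, -x⟩ : Dorroh R I) + ⟨ψ y, -y⟩ = ⟨ψ x + ψ y, -(x + y)⟩ := by
        ext <;> simp [neg_add, add_comm]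
      exact he ▸ K.add_mem (hψspec x hx) (hψspec y hy)
    · intro x hx y hy
      rw [hmul0 x hx y hy, hψ0, hψψ x hx y hy]
    · exact fun r x hx => (hsmulKS r x hx).2
    · exact fun r x hx => (hopKS r x hx).2

end DorrohHelpers

/-- `E(R,I)` is semiprime iff `I` is semiprime, there is no nonzero square-zero ideal of
`R` inside `ann_R(I)`, and there is no nonzero square-zero `R`-subrng `J ⊆ I` with an
`R`-homomorphism `φ : J → R` satisfying `ij = iφ(j)`, `ji = φ(j)i`. In particular, if
`R` and `I` are semiprime then so is `E(R,I)`. -/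
theorem dorroh_semiprime_iff :
    (IsSemiprimeRng (Dorroh R I) ↔
      (IsSemiprimeRng I ∧
        (¬ ∃ A : TwoSidedIdeal R, A ≠ ⊥ ∧ (∀ x ∈ A, ∀ y ∈ A, x * y = 0) ∧
          (A : Set R) ⊆ annR R I) ∧
        (¬ ∃ (J : Set I) (ψ : I → R), IsRSubrng R J ∧ (∃ x ∈ J, x ≠ 0) ∧
          IsRHomOn R J ψ ∧ (∀ x ∈ J, ∀ y ∈ J, x * y = 0) ∧
          (∀ i : I, ∀ j ∈ J, i * j = op (ψ j) • i ∧ j * i = ψ j • i)))) ∧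
    (IsSemiprimeRng R → IsSemiprimeRng I → IsSemiprimeRng (Dorroh R I)) := by
  constructor
  · constructor
    · intro hE
      exact ⟨dorroh_semiprime_to_I hE, dorroh_semiprime_no_ann hE, dorroh_semiprime_no_J hE⟩
    · rintro ⟨h1, h2, h3⟩
      exact dorroh_semiprime_of h1 h2 h3
  · intro hR hI
    refine dorroh_semiprime_of hI ?_ ?_
    · rintro ⟨A, hA0, hA2, -⟩
      exact hA0 (hR A hA2)
    · rintro ⟨J, ψ, ⟨h0J, haddJ, hnegJ, hmulJ, hsmulJ, hopJ⟩, ⟨x0, hx0J, hx00⟩,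
        ⟨ψadd, ψmul, ψsmul, ψop⟩, hJ2, hcomp⟩
      have hψ0 : ψ 0 = 0 := by
        have h00 : ψ 0 = ψ 0 + ψ 0 := by simpa using ψadd 0 h0J 0 h0J
        exact left_eq_add.mp h00
      have hψneg : ∀ x ∈ J, ψ (-x) = -ψ x := fun x hx => by
        rw [← neg_one_smul R x, ψsmul (-1) x hx, neg_one_mul]
      set A : TwoSidedIdeal R := TwoSidedIdeal.mk' {r : R | ∃ x ∈ J, ψ x = r}
        ⟨0, h0J, hψ0⟩
        (fun {a b} ha hb => by
          obtain ⟨x, hx, rfl⟩ := ha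
          obtain ⟨y, hy, rfl⟩ := hb
          exact ⟨x + y, haddJ x hx y hy, ψadd x hx y hy⟩)
        (fun {a} ha => by
          obtain ⟨x, hx, rfl⟩ := ha
          exact ⟨-x, hnegJ x hx, hψneg x hx⟩)
        (fun {x y} hy => by
          obtain ⟨z, hz, rfl⟩ := hy
          exact ⟨x • z, hsmulJ x z hz, ψsmul x z hz⟩)
        (fun {x y} hx => by
          obtain ⟨z, hz, rfl⟩ := hx
          exact ⟨op y • z, hopJ y z hz, ψop y z hz⟩) with hAdef
      have hmemA : ∀ r : R, r ∈ A ↔ ∃ x ∈ J, ψ x = r := fun r => by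
        rw [hAdef]; exact TwoSidedIdeal.mem_mk' _ _ _ _ _ _ _
      have hA2 : ∀ a ∈ A, ∀ b ∈ A, a * b = 0 := by
        intro a ha b hb
        obtain ⟨x, hx, rfl⟩ := (hmemA a).mp ha
        obtain ⟨y, hy, rfl⟩ := (hmemA b).mp hb
        rw [← ψmul x hx y hy, hJ2 x hx y hy, hψ0]
      have hψz : ∀ x ∈ J, ψ x = 0 := fun x hx =>
        tsi_bot_forall (hR A hA2) _ ((hmemA _).mpr ⟨x, hx, rfl⟩)
      have hmul_left : ∀ (i : I), ∀ j ∈ J, i * j = 0 := fun i j hj => by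
        rw [(hcomp i j hj).1, hψz j hj, op_zero, zero_smul]
      have hmul_right : ∀ (i : I), ∀ j ∈ J, j * i = 0 := fun i j hj => by
        rw [(hcomp i j hj).2, hψz j hj, zero_smul]
      set JI : TwoSidedIdeal I := TwoSidedIdeal.mk' J h0J
        (fun {x y} hx hy => haddJ x hx y hy)
        (fun {x} hx => hnegJ x hx)
        (fun {x y} hy => by rw [hmul_left x y hy]; exact h0J)
        (fun {x y} hx => by rw [hmul_right y x hx]; exact h0J) with hJIdef
      have hmemJI : ∀ x : I, x ∈ JI ↔ x ∈ J := fun x => by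
        rw [hJIdef]; exact TwoSidedIdeal.mem_mk' _ _ _ _ _ _ _
      have hbot := hI JI (fun x hx y hy => hJ2 x ((hmemJI x).mp hx) y ((hmemJI y).mp hy))
      exact hx00 (tsi_bot_forall hbot x0 ((hmemJI x0).mpr hx0J))
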